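/- Let 0 < p ≤ 1 ≤ s < ∞ with p < s, λ > n(s/p - 1), and γ_p = n(1/p - 1). Suppose M satisfies the two molecule size conditions (M1) and (M2) with respect to B = B(x_B, r), with r ≥ 1. Then for every multi-index α with |α| ≤ γ_p, |∫ M(x)(x - x_B)^α dx| ≤ C_{n,s,p,λ}, i.e. the moments of M up to order ⌊γ_p⌋ are bounded by a constant independent of M and r. -/

import Mathlib

open MeasureTheory Metric ENNReal

private lemma holder_aux {X : Type*} [MeasurableSpace X] (μ : Measure X) {s : ℝ}
    (hs : 1 ≤ s) {f : X → ℝ≥0∞} (hf : AEMeasurable f μ) :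
    ∫⁻ x, f x ∂μ ≤ (∫⁻ x, f x ^ s ∂μ) ^ (1 / s) * μ Set.univ ^ (1 - 1 / s) := by
  rcases eq_or_lt_of_le hs with h1 | h1
  · subst h1
    simp
  · have hs0 : s ≠ 0 := by positivity
    have hpq : s.HolderConjugate (s / (s - 1)) := Real.HolderConjugate.conjExponent h1
    have h := ENNReal.lintegral_mul_le_Lp_mul_Lq μ hpq hf
      (aemeasurable_const (b := (1 : ℝ≥0∞)))
    have hq : 1 / (s / (s - 1)) = 1 - 1 / s := by
      field_simp
    simpa [hq, ENNReal.one_rpow, MeasureTheory.lintegral_one] using h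

private lemma exists_dyadic {t : ℝ} (ht : 1 ≤ t) : ∃ k : ℕ, 2 ^ k ≤ t ∧ t < 2 ^ (k + 1) := by
  have hex : ∃ m : ℕ, t < 2 ^ m := pow_unbounded_of_one_lt t one_lt_two
  classical
  have hm : t < 2 ^ Nat.find hex := Nat.find_spec hex
  have hm0 : Nat.find hex ≠ 0 := by
    intro h
    rw [h] at hm
    simp at hm
    linarith
  obtain ⟨k, hk⟩ := Nat.exists_eq_succ_of_ne_zero hm0
  refine ⟨k, not_lt.1 ?_, by rw [← Nat.succ_eq_add_one, ← hk]; exact hm⟩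
  exact Nat.find_min hex (by omega)

private lemma prod3_le {r : ℝ} (hr : 1 ≤ r) {v : ℝ} (hv : 0 < v) {x1 x2 y c : ℝ}
    (hx : x1 ≤ x2) (hy : y ≤ 0) :
    (2 : ℝ) ^ x1 * r ^ y * v ^ c ≤ 2 ^ x2 * v ^ c := by
  have h1 : (2 : ℝ) ^ x1 ≤ 2 ^ x2 := Real.rpow_le_rpow_of_exponent_le one_le_two hx
  have h2 : r ^ y ≤ 1 := Real.rpow_le_one_of_one_le_of_nonpos hr hy
  have h3 : (0 : ℝ) < v ^ c := Real.rpow_pos_of_pos hv c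
  have h4 : (0 : ℝ) < (2 : ℝ) ^ x1 := Real.rpow_pos_of_pos two_pos x1
  have h5 : (0 : ℝ) ≤ r ^ y := Real.rpow_nonneg (by linarith) y
  have h6 : (2 : ℝ) ^ x1 * r ^ y ≤ 2 ^ x2 := by
    have h7 := mul_le_mul h1 h2 h5 (Real.rpow_nonneg (by norm_num) x2)
    simpa using h7
  exact mul_le_mul_of_nonneg_right h6 h3.le

/-- For a molecule associated to a large ball (`r ≥ 1`), the moments up to order
`⌊γ_p⌋` are bounded by a constant independent of `M` and `r`. -/
theorem stmt3 (n : ℕ) (p s l : ℝ)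
    (hp : 0 < p) (hp1 : p ≤ 1) (hs : 1 ≤ s) (hps : p < s)
    (hl : (n : ℝ) * (s / p - 1) < l) :
    ∃ C : ℝ, 0 < C ∧
      ∀ (M : EuclideanSpace ℝ (Fin n) → ℂ) (xB : EuclideanSpace ℝ (Fin n)) (r : ℝ),
        1 ≤ r → Measurable M →
        (∫⁻ x in ball xB r, (‖M x‖₊ : ℝ≥0∞) ^ s) ^ (1 / s)
          ≤ ENNReal.ofReal (r ^ ((n : ℝ) * (1 / s - 1 / p))) →
        (∫⁻ x in (ball xB r)ᶜ,
            (‖M x‖₊ : ℝ≥0∞) ^ s * ENNReal.ofReal (‖x - xB‖ ^ l)) ^ (1 / s)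
          ≤ ENNReal.ofReal (r ^ (l / s + (n : ℝ) * (1 / s - 1 / p))) →
        ∀ α : Fin n → ℕ, (∑ i, (α i : ℝ)) ≤ (n : ℝ) * (1 / p - 1) →
          ‖∫ x, M x * ((∏ i, (x i - xB i) ^ α i : ℝ) : ℂ)‖ ≤ C := by
  classical
  have hs0 : (0 : ℝ) < s := lt_of_lt_of_le one_pos hs
  have hsne : s ≠ 0 := ne_of_gt hs0
  have hinvs : (0 : ℝ) ≤ 1 / s := by positivity
  have h1s : (0 : ℝ) ≤ 1 - 1 / s := by
    have : 1 / s ≤ 1 := by rw [div_le_one hs0]; exact hs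
    linarith
  have hpinv : (1 : ℝ) ≤ 1 / p := by rw [le_div_iff₀ hp]; linarith
  have hl0 : (0 : ℝ) < l := by
    refine lt_of_le_of_lt ?_ hl
    have : (1 : ℝ) ≤ s / p := by rw [le_div_iff₀ hp]; linarith
    exact mul_nonneg (Nat.cast_nonneg n) (by linarith)
  have hpne : p ≠ 0 := ne_of_gt hp
  obtain ⟨γ, hγdef⟩ : ∃ γ : ℝ, γ = (n : ℝ) * (1 / p - 1) := ⟨_, rfl⟩
  have hγ0 : (0 : ℝ) ≤ γ := by
    rw [hγdef]; exact mul_nonneg (Nat.cast_nonneg n) (by linarith)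
  obtain ⟨δ, hδdef⟩ : ∃ δ : ℝ, δ = γ + (n : ℝ) * (1 - 1 / s) - l / s := ⟨_, rfl⟩
  have hδ0 : δ < 0 := by
    have h3 : (n : ℝ) / p < (l + n) / s := by
      rw [lt_div_iff₀ hs0]
      have hl' := hl
      ring_nf at hl' ⊢
      linarith
    rw [hδdef, hγdef]
    ring_nf at h3 ⊢
    linarith
  obtain ⟨V, hVdef⟩ : ∃ V : ℝ≥0∞, V = volume (ball (0 : EuclideanSpace ℝ (Fin n)) 1) :=
    ⟨_, rfl⟩
  have hVlt : V < ∞ := by rw [hVdef]; exact measure_ball_lt_top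
  have hVpos : 0 < V := by rw [hVdef]; exact measure_ball_pos _ _ one_pos
  obtain ⟨v, hvdef⟩ : ∃ v : ℝ, v = V.toReal := ⟨_, rfl⟩
  have hv0 : 0 < v := by rw [hvdef]; exact ENNReal.toReal_pos hVpos.ne' hVlt.ne
  have hVv : V = ENNReal.ofReal v := by
    rw [hvdef, ENNReal.ofReal_toReal hVlt.ne]
  have hball : ∀ (x : EuclideanSpace ℝ (Fin n)) (R : ℝ), 0 < R →
      volume (ball x R) = ENNReal.ofReal (R ^ (n : ℕ) * v) := by
    intro x R hR
    rcases Nat.eq_zero_or_pos n with hn | hn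
    · have huniv : ∀ (y : EuclideanSpace ℝ (Fin n)) (ρ : ℝ), 0 < ρ → ball y ρ = Set.univ := by
        intro y ρ hρ
        haveI : IsEmpty (Fin n) := by rw [hn]; infer_instance
        refine Set.eq_univ_iff_forall.2 fun z => ?_
        have hz : z = y := Subsingleton.elim z y
        rw [mem_ball, hz, dist_self]
        exact hρ
      have h1 : volume (ball x R) = V := by
        rw [hVdef, huniv x R hR, huniv 0 1 one_pos]
      rw [h1, hVv, hn]
      norm_num
    · haveI : Nonempty (Fin n) := ⟨⟨0, hn⟩⟩
      rw [Measure.addHaar_ball (μ := volume) x hR.le, finrank_euclideanSpace_fin, ← hVdef, hVv,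
        ← ENNReal.ofReal_mul (by positivity)]
  obtain ⟨q, hqdef⟩ : ∃ q : ℝ, q = (2 : ℝ) ^ δ := ⟨_, rfl⟩
  have hq0 : 0 < q := by rw [hqdef]; exact Real.rpow_pos_of_pos two_pos δ
  have hq1 : q < 1 := by rw [hqdef]; exact Real.rpow_lt_one_of_one_lt_of_neg one_lt_two hδ0
  have h1q : (0 : ℝ) < 1 - q := by linarith
  obtain ⟨C1, hC1def⟩ : ∃ C1 : ℝ, C1 = v ^ (1 - 1 / s) := ⟨_, rfl⟩
  have hC1pos : 0 < C1 := by rw [hC1def]; exact Real.rpow_pos_of_pos hv0 _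
  obtain ⟨D, hDdef⟩ : ∃ D : ℝ, D = (2 : ℝ) ^ (γ + (n : ℝ)) * C1 := ⟨_, rfl⟩
  have hDpos : 0 < D := by rw [hDdef]; exact mul_pos (Real.rpow_pos_of_pos two_pos _) hC1pos
  have hCpos : 0 < C1 + D * (1 - q)⁻¹ + 1 := by
    have : 0 < D * (1 - q)⁻¹ := mul_pos hDpos (inv_pos.2 h1q)
    linarith
  refine ⟨C1 + D * (1 - q)⁻¹ + 1, hCpos, ?_⟩
  intro M xB r hr hM hM1 hM2 α hα
  have hr0 : (0 : ℝ) < r := lt_of_lt_of_le one_pos hr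
  obtain ⟨a, hadef⟩ : ∃ a : ℕ, a = ∑ i, α i := ⟨_, rfl⟩
  have haγ : (a : ℝ) ≤ γ := by
    rw [hγdef, hadef]
    push_cast
    exact hα
  have hN : Measurable fun x : EuclideanSpace ℝ (Fin n) => (‖M x‖₊ : ℝ≥0∞) := hM.nnnorm.coe_nnreal_ennreal
  -- coordinate bound
  have hcoord : ∀ (x : EuclideanSpace ℝ (Fin n)) (i : Fin n), |x i - xB i| ≤ ‖x - xB‖ := by
    intro x i
    have h1 : |x i - xB i| = ‖(x - xB) i‖ := by
      simp [PiLp.sub_apply, Real.norm_eq_abs]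
    rw [h1, EuclideanSpace.norm_eq, ← Real.sqrt_sq (norm_nonneg ((x - xB) i))]
    exact Real.sqrt_le_sqrt (Finset.single_le_sum
      (f := fun j => ‖(x - xB) j‖ ^ 2) (fun j _ => by positivity) (Finset.mem_univ i))
  -- pointwise bound on the integrand
  have hpoly : ∀ x : EuclideanSpace ℝ (Fin n),
      ENNReal.ofReal ‖M x * ((∏ i, (x i - xB i) ^ α i : ℝ) : ℂ)‖ ≤
        (‖M x‖₊ : ℝ≥0∞) * ENNReal.ofReal (‖x - xB‖ ^ a) := by
    intro x
    rw [norm_mul, Complex.norm_real, Real.norm_eq_abs,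
      ENNReal.ofReal_mul (norm_nonneg _), ofReal_norm, enorm_eq_nnnorm]
    refine mul_le_mul_right (ENNReal.ofReal_le_ofReal ?_) _
    calc |∏ i, (x i - xB i) ^ α i| = ∏ i, |x i - xB i| ^ α i := by
          rw [Finset.abs_prod]
          exact Finset.prod_congr rfl fun i _ => abs_pow _ _
      _ ≤ ∏ i, ‖x - xB‖ ^ α i :=
          Finset.prod_le_prod (fun i _ => by positivity)
            (fun i _ => pow_le_pow_left₀ (abs_nonneg _) (hcoord x i) _)
      _ = ‖x - xB‖ ^ a := by rw [hadef]; exact Finset.prod_pow_eq_pow_sum _ _ _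
  -- Hölder-type bound on any set
  have hhold : ∀ A : Set (EuclideanSpace ℝ (Fin n)),
      ∫⁻ x in A, (‖M x‖₊ : ℝ≥0∞) ≤
        (∫⁻ x in A, (‖M x‖₊ : ℝ≥0∞) ^ s) ^ (1 / s) * volume A ^ (1 - 1 / s) := by
    intro A
    have h := holder_aux (volume.restrict A) hs
      (f := fun x => (‖M x‖₊ : ℝ≥0∞)) hN.aemeasurable
    simpa [Measure.restrict_apply_univ] using h
  -- ball estimate
  have hI1 : ∫⁻ x in ball xB r,
      (‖M x‖₊ : ℝ≥0∞) * ENNReal.ofReal (‖x - xB‖ ^ a) ≤ ENNReal.ofReal C1 := by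
    have realball : r ^ a * (r ^ ((n : ℝ) * (1 / s - 1 / p)) *
        (r ^ (n : ℕ) * v) ^ (1 - 1 / s)) ≤ C1 := by
      have e1 : (r ^ (n : ℕ) * v) ^ (1 - 1 / s) =
          r ^ ((n : ℝ) * (1 - 1 / s)) * v ^ (1 - 1 / s) := by
        rw [Real.mul_rpow (by positivity) hv0.le, ← Real.rpow_natCast r n,
          ← Real.rpow_mul hr0.le]
      rw [e1, hC1def, ← Real.rpow_natCast r a]
      have e2 : r ^ (a : ℝ) * (r ^ ((n : ℝ) * (1 / s - 1 / p)) *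
          (r ^ ((n : ℝ) * (1 - 1 / s)) * v ^ (1 - 1 / s))) =
          r ^ ((a : ℝ) + ((n : ℝ) * (1 / s - 1 / p) + (n : ℝ) * (1 - 1 / s))) *
            v ^ (1 - 1 / s) := by
        rw [Real.rpow_add hr0, Real.rpow_add hr0]
        ring
      rw [e2]
      have e3 : (a : ℝ) + ((n : ℝ) * (1 / s - 1 / p) + (n : ℝ) * (1 - 1 / s)) =
          (a : ℝ) - γ := by
        rw [hγdef]
        ring
      calc r ^ ((a : ℝ) + ((n : ℝ) * (1 / s - 1 / p) + (n : ℝ) * (1 - 1 / s))) *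
            v ^ (1 - 1 / s)
          ≤ 1 * v ^ (1 - 1 / s) := by
            refine mul_le_mul_of_nonneg_right ?_ (by positivity)
            refine Real.rpow_le_one_of_one_le_of_nonpos hr ?_
            rw [e3]
            linarith
        _ = v ^ (1 - 1 / s) := one_mul _
    have step1 : ∫⁻ x in ball xB r, (‖M x‖₊ : ℝ≥0∞) * ENNReal.ofReal (‖x - xB‖ ^ a)
        ≤ ENNReal.ofReal (r ^ a) * ∫⁻ x in ball xB r, (‖M x‖₊ : ℝ≥0∞) := by
      rw [← lintegral_const_mul' _ _ ENNReal.ofReal_ne_top]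
      refine setLIntegral_mono' measurableSet_ball fun x hx => ?_
      rw [mul_comm ((‖M x‖₊ : ℝ≥0∞))]
      refine mul_le_mul_left (ENNReal.ofReal_le_ofReal ?_) _
      have hdx : ‖x - xB‖ < r := by rw [← dist_eq_norm]; exact mem_ball.1 hx
      exact pow_le_pow_left₀ (norm_nonneg _) hdx.le a
    have step3 : (∫⁻ x in ball xB r, (‖M x‖₊ : ℝ≥0∞) ^ s) ^ (1 / s) *
        volume (ball xB r) ^ (1 - 1 / s) ≤
        ENNReal.ofReal (r ^ ((n : ℝ) * (1 / s - 1 / p))) *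
          ENNReal.ofReal ((r ^ (n : ℕ) * v) ^ (1 - 1 / s)) := by
      refine mul_le_mul' hM1 ?_
      rw [hball xB r hr0, ← ENNReal.ofReal_rpow_of_pos (by positivity)]
    calc ∫⁻ x in ball xB r, (‖M x‖₊ : ℝ≥0∞) * ENNReal.ofReal (‖x - xB‖ ^ a)
        ≤ ENNReal.ofReal (r ^ a) * ∫⁻ x in ball xB r, (‖M x‖₊ : ℝ≥0∞) := step1
      _ ≤ ENNReal.ofReal (r ^ a) *
          ((∫⁻ x in ball xB r, (‖M x‖₊ : ℝ≥0∞) ^ s) ^ (1 / s) *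
            volume (ball xB r) ^ (1 - 1 / s)) := mul_le_mul_right (hhold _) _
      _ ≤ ENNReal.ofReal (r ^ a) *
          (ENNReal.ofReal (r ^ ((n : ℝ) * (1 / s - 1 / p))) *
            ENNReal.ofReal ((r ^ (n : ℕ) * v) ^ (1 - 1 / s))) := mul_le_mul_right step3 _
      _ = ENNReal.ofReal (r ^ a * (r ^ ((n : ℝ) * (1 / s - 1 / p)) *
            (r ^ (n : ℕ) * v) ^ (1 - 1 / s))) := by
          rw [← ENNReal.ofReal_mul (by positivity), ← ENNReal.ofReal_mul (by positivity)]
      _ ≤ ENNReal.ofReal C1 := ENNReal.ofReal_le_ofReal realball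
  -- annuli
  have hSsub : ∀ k : ℕ,
      (ball xB (2 ^ (k + 1) * r) \ ball xB (2 ^ k * r)) ⊆ (ball xB r)ᶜ := by
    intro k x hx
    have h1 : 2 ^ k * r ≤ dist x xB := not_lt.1 fun h => hx.2 (mem_ball.2 h)
    have h2 : r ≤ 2 ^ k * r := le_mul_of_one_le_left hr0.le (one_le_pow₀ one_le_two)
    intro hxr
    exact absurd (mem_ball.1 hxr) (not_lt.2 (h2.trans h1))
  have hcover : (ball xB r)ᶜ ⊆
      ⋃ k : ℕ, (ball xB (2 ^ (k + 1) * r) \ ball xB (2 ^ k * r)) := by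
    intro x hx
    have hxr : r ≤ dist x xB := not_lt.1 fun h => hx (mem_ball.2 h)
    obtain ⟨k, hk1, hk2⟩ := exists_dyadic ((one_le_div hr0).2 hxr)
    rw [div_lt_iff₀ hr0] at hk2
    rw [le_div_iff₀ hr0] at hk1
    refine Set.mem_iUnion.2 ⟨k, mem_ball.2 (by linarith), fun hmem => ?_⟩
    exact absurd (mem_ball.1 hmem) (not_lt.2 hk1)
  have hterm : ∀ k : ℕ, ∫⁻ x in (ball xB (2 ^ (k + 1) * r) \ ball xB (2 ^ k * r)),
      (‖M x‖₊ : ℝ≥0∞) * ENNReal.ofReal (‖x - xB‖ ^ a) ≤ ENNReal.ofReal (D * q ^ k) := by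
    intro k
    have hRk : (0 : ℝ) < 2 ^ k * r := by positivity
    have hRk1 : (0 : ℝ) < 2 ^ (k + 1) * r := by positivity
    have hmeasS : MeasurableSet (ball xB (2 ^ (k + 1) * r) \ ball xB (2 ^ k * r)) :=
      measurableSet_ball.diff measurableSet_ball
    -- the key real inequality
    have realann : (2 ^ (k + 1) * r) ^ a *
        (((((2 ^ k * r) ^ l)⁻¹) ^ (1 / s) * r ^ (l / s + (n : ℝ) * (1 / s - 1 / p))) *
          ((2 ^ (k + 1) * r) ^ (n : ℕ) * v) ^ (1 - 1 / s)) ≤ D * q ^ k := by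
      have e1 : ((2 : ℝ) ^ (k + 1) * r) ^ a =
          2 ^ (((k : ℝ) + 1) * (a : ℝ)) * r ^ (a : ℝ) := by
        rw [← Real.rpow_natCast ((2 : ℝ) ^ (k + 1) * r) a,
          Real.mul_rpow (by positivity) hr0.le,
          ← Real.rpow_natCast (2 : ℝ) (k + 1), ← Real.rpow_mul (by norm_num)]
        push_cast
        ring_nf
      have e2 : ((((2 : ℝ) ^ k * r) ^ l)⁻¹) ^ (1 / s) =
          2 ^ ((k : ℝ) * (-(l * (1 / s)))) * r ^ (-(l * (1 / s))) := by
        rw [← Real.rpow_neg hRk.le, ← Real.rpow_mul hRk.le,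
          Real.mul_rpow (by positivity) hr0.le,
          ← Real.rpow_natCast (2 : ℝ) k, ← Real.rpow_mul (by norm_num)]
        ring_nf
      have e3 : (((2 : ℝ) ^ (k + 1) * r) ^ (n : ℕ) * v) ^ (1 - 1 / s) =
          2 ^ (((k : ℝ) + 1) * ((n : ℝ) * (1 - 1 / s))) * r ^ ((n : ℝ) * (1 - 1 / s)) *
            v ^ (1 - 1 / s) := by
        rw [Real.mul_rpow (by positivity) hv0.le,
          ← Real.rpow_natCast ((2 : ℝ) ^ (k + 1) * r) n, ← Real.rpow_mul (by positivity),
          Real.mul_rpow (by positivity) hr0.le,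
          ← Real.rpow_natCast (2 : ℝ) (k + 1), ← Real.rpow_mul (by norm_num)]
        push_cast
        ring_nf
      rw [e1, e2, e3]
      have ecollect : 2 ^ (((k : ℝ) + 1) * (a : ℝ)) * r ^ (a : ℝ) *
          ((2 ^ ((k : ℝ) * (-(l * (1 / s)))) * r ^ (-(l * (1 / s))) *
            r ^ (l / s + (n : ℝ) * (1 / s - 1 / p))) *
            (2 ^ (((k : ℝ) + 1) * ((n : ℝ) * (1 - 1 / s))) * r ^ ((n : ℝ) * (1 - 1 / s)) *
              v ^ (1 - 1 / s))) =
          2 ^ (((k : ℝ) + 1) * (a : ℝ) + (k : ℝ) * (-(l * (1 / s))) +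
              ((k : ℝ) + 1) * ((n : ℝ) * (1 - 1 / s))) *
            r ^ ((a : ℝ) + (-(l * (1 / s))) + (l / s + (n : ℝ) * (1 / s - 1 / p)) +
              (n : ℝ) * (1 - 1 / s)) * v ^ (1 - 1 / s) := by
        rw [Real.rpow_add two_pos, Real.rpow_add two_pos, Real.rpow_add hr0,
          Real.rpow_add hr0, Real.rpow_add hr0, Real.rpow_add hr0, Real.rpow_add hr0]
        ring
      rw [ecollect]
      have hqk : D * q ^ k = 2 ^ (γ + (n : ℝ) + δ * (k : ℝ)) * v ^ (1 - 1 / s) := by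
        rw [hDdef, hC1def, hqdef, ← Real.rpow_natCast ((2 : ℝ) ^ δ) k,
          ← Real.rpow_mul (by norm_num : (0:ℝ) ≤ 2), Real.rpow_add two_pos,
          Real.rpow_add two_pos, Real.rpow_add two_pos]
        ring
      rw [hqk]
      refine prod3_le hr hv0 ?_ ?_
      · have hka : (0 : ℝ) ≤ (k : ℝ) * (γ - (a : ℝ)) :=
          mul_nonneg (Nat.cast_nonneg k) (by linarith)
        have hns : (0 : ℝ) ≤ (n : ℝ) / s := by positivity
        rw [hδdef]
        ring_nf at hka hns ⊢
        linarith
      · have heq : (a : ℝ) + (-(l * (1 / s))) + (l / s + (n : ℝ) * (1 / s - 1 / p)) +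
            (n : ℝ) * (1 - 1 / s) = (a : ℝ) - γ := by
          rw [hγdef]
          ring
        rw [heq]
        linarith
    -- step 1: pull out polynomial factor
    have step1 : ∫⁻ x in (ball xB (2 ^ (k + 1) * r) \ ball xB (2 ^ k * r)),
        (‖M x‖₊ : ℝ≥0∞) * ENNReal.ofReal (‖x - xB‖ ^ a)
        ≤ ENNReal.ofReal ((2 ^ (k + 1) * r) ^ a) *
          ∫⁻ x in (ball xB (2 ^ (k + 1) * r) \ ball xB (2 ^ k * r)), (‖M x‖₊ : ℝ≥0∞) := by
      rw [← lintegral_const_mul' _ _ ENNReal.ofReal_ne_top]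
      refine setLIntegral_mono' hmeasS fun x hx => ?_
      rw [mul_comm ((‖M x‖₊ : ℝ≥0∞))]
      refine mul_le_mul_left (ENNReal.ofReal_le_ofReal ?_) _
      have hdx : ‖x - xB‖ < 2 ^ (k + 1) * r := by
        rw [← dist_eq_norm]; exact mem_ball.1 hx.1
      exact pow_le_pow_left₀ (norm_nonneg _) hdx.le a
    have hvol : volume (ball xB (2 ^ (k + 1) * r) \ ball xB (2 ^ k * r)) ≤
        ENNReal.ofReal ((2 ^ (k + 1) * r) ^ (n : ℕ) * v) := by
      rw [← hball xB _ hRk1]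
      exact measure_mono Set.diff_subset
    have hker : ∫⁻ x in (ball xB (2 ^ (k + 1) * r) \ ball xB (2 ^ k * r)),
        (‖M x‖₊ : ℝ≥0∞) ^ s ≤ ENNReal.ofReal (((2 ^ k * r) ^ l)⁻¹) *
          ∫⁻ x in (ball xB r)ᶜ, (‖M x‖₊ : ℝ≥0∞) ^ s * ENNReal.ofReal (‖x - xB‖ ^ l) := by
      have hpt2 : ∀ x ∈ (ball xB (2 ^ (k + 1) * r) \ ball xB (2 ^ k * r)),
          (‖M x‖₊ : ℝ≥0∞) ^ s ≤ ENNReal.ofReal (((2 ^ k * r) ^ l)⁻¹) *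
            ((‖M x‖₊ : ℝ≥0∞) ^ s * ENNReal.ofReal (‖x - xB‖ ^ l)) := by
        intro x hx
        have hdist : 2 ^ k * r ≤ ‖x - xB‖ := by
          rw [← dist_eq_norm]
          exact not_lt.1 fun h => hx.2 (mem_ball.2 h)
        have hw : ENNReal.ofReal ((2 ^ k * r) ^ l) ≤ ENNReal.ofReal (‖x - xB‖ ^ l) :=
          ENNReal.ofReal_le_ofReal (Real.rpow_le_rpow hRk.le hdist hl0.le)
        calc (‖M x‖₊ : ℝ≥0∞) ^ s
            = ENNReal.ofReal (((2 ^ k * r) ^ l)⁻¹) * ENNReal.ofReal ((2 ^ k * r) ^ l) *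
              (‖M x‖₊ : ℝ≥0∞) ^ s := by
              rw [← ENNReal.ofReal_mul (by positivity),
                inv_mul_cancel₀ (by positivity), ENNReal.ofReal_one, one_mul]
          _ ≤ ENNReal.ofReal (((2 ^ k * r) ^ l)⁻¹) *
              ((‖M x‖₊ : ℝ≥0∞) ^ s * ENNReal.ofReal (‖x - xB‖ ^ l)) := by
              rw [mul_assoc]
              refine mul_le_mul_right ?_ _
              rw [mul_comm]
              exact mul_le_mul_right hw _
      calc ∫⁻ x in (ball xB (2 ^ (k + 1) * r) \ ball xB (2 ^ k * r)), (‖M x‖₊ : ℝ≥0∞) ^ s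
          ≤ ∫⁻ x in (ball xB (2 ^ (k + 1) * r) \ ball xB (2 ^ k * r)),
            ENNReal.ofReal (((2 ^ k * r) ^ l)⁻¹) *
              ((‖M x‖₊ : ℝ≥0∞) ^ s * ENNReal.ofReal (‖x - xB‖ ^ l)) :=
            setLIntegral_mono' hmeasS hpt2
        _ = ENNReal.ofReal (((2 ^ k * r) ^ l)⁻¹) *
            ∫⁻ x in (ball xB (2 ^ (k + 1) * r) \ ball xB (2 ^ k * r)),
              (‖M x‖₊ : ℝ≥0∞) ^ s * ENNReal.ofReal (‖x - xB‖ ^ l) :=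
            lintegral_const_mul' _ _ ENNReal.ofReal_ne_top
        _ ≤ _ := mul_le_mul_right (lintegral_mono_set (hSsub k)) _
    have hker2 : (∫⁻ x in (ball xB (2 ^ (k + 1) * r) \ ball xB (2 ^ k * r)),
        (‖M x‖₊ : ℝ≥0∞) ^ s) ^ (1 / s) ≤
        ENNReal.ofReal ((((2 ^ k * r) ^ l)⁻¹) ^ (1 / s)) *
          ENNReal.ofReal (r ^ (l / s + (n : ℝ) * (1 / s - 1 / p))) := by
      calc (∫⁻ x in (ball xB (2 ^ (k + 1) * r) \ ball xB (2 ^ k * r)),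
            (‖M x‖₊ : ℝ≥0∞) ^ s) ^ (1 / s)
          ≤ (ENNReal.ofReal (((2 ^ k * r) ^ l)⁻¹) *
            ∫⁻ x in (ball xB r)ᶜ, (‖M x‖₊ : ℝ≥0∞) ^ s * ENNReal.ofReal (‖x - xB‖ ^ l)) ^
              (1 / s) := ENNReal.rpow_le_rpow hker hinvs
        _ = (ENNReal.ofReal (((2 ^ k * r) ^ l)⁻¹)) ^ (1 / s) *
            (∫⁻ x in (ball xB r)ᶜ, (‖M x‖₊ : ℝ≥0∞) ^ s * ENNReal.ofReal (‖x - xB‖ ^ l)) ^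
              (1 / s) := ENNReal.mul_rpow_of_nonneg _ _ hinvs
        _ ≤ ENNReal.ofReal ((((2 ^ k * r) ^ l)⁻¹) ^ (1 / s)) *
            ENNReal.ofReal (r ^ (l / s + (n : ℝ) * (1 / s - 1 / p))) := by
            rw [← ENNReal.ofReal_rpow_of_pos (by positivity)]
            exact mul_le_mul_right hM2 _
    calc ∫⁻ x in (ball xB (2 ^ (k + 1) * r) \ ball xB (2 ^ k * r)),
          (‖M x‖₊ : ℝ≥0∞) * ENNReal.ofReal (‖x - xB‖ ^ a)
        ≤ ENNReal.ofReal ((2 ^ (k + 1) * r) ^ a) *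
          ∫⁻ x in (ball xB (2 ^ (k + 1) * r) \ ball xB (2 ^ k * r)),
            (‖M x‖₊ : ℝ≥0∞) := step1
      _ ≤ ENNReal.ofReal ((2 ^ (k + 1) * r) ^ a) *
          ((∫⁻ x in (ball xB (2 ^ (k + 1) * r) \ ball xB (2 ^ k * r)),
            (‖M x‖₊ : ℝ≥0∞) ^ s) ^ (1 / s) *
            volume (ball xB (2 ^ (k + 1) * r) \ ball xB (2 ^ k * r)) ^ (1 - 1 / s)) :=
          mul_le_mul_right (hhold _) _
      _ ≤ ENNReal.ofReal ((2 ^ (k + 1) * r) ^ a) *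
          ((ENNReal.ofReal ((((2 ^ k * r) ^ l)⁻¹) ^ (1 / s)) *
            ENNReal.ofReal (r ^ (l / s + (n : ℝ) * (1 / s - 1 / p)))) *
            ENNReal.ofReal (((2 ^ (k + 1) * r) ^ (n : ℕ) * v) ^ (1 - 1 / s))) := by
          refine mul_le_mul_right (mul_le_mul' hker2 ?_) _
          calc volume (ball xB (2 ^ (k + 1) * r) \ ball xB (2 ^ k * r)) ^ (1 - 1 / s)
              ≤ (ENNReal.ofReal ((2 ^ (k + 1) * r) ^ (n : ℕ) * v)) ^ (1 - 1 / s) :=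
                ENNReal.rpow_le_rpow hvol h1s
            _ = ENNReal.ofReal (((2 ^ (k + 1) * r) ^ (n : ℕ) * v) ^ (1 - 1 / s)) :=
                ENNReal.ofReal_rpow_of_pos (by positivity)
      _ = ENNReal.ofReal ((2 ^ (k + 1) * r) ^ a *
            (((((2 ^ k * r) ^ l)⁻¹) ^ (1 / s) * r ^ (l / s + (n : ℝ) * (1 / s - 1 / p))) *
              ((2 ^ (k + 1) * r) ^ (n : ℕ) * v) ^ (1 - 1 / s))) := by
          rw [← ENNReal.ofReal_mul (by positivity), ← ENNReal.ofReal_mul (by positivity),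
            ← ENNReal.ofReal_mul (by positivity)]
      _ ≤ ENNReal.ofReal (D * q ^ k) := ENNReal.ofReal_le_ofReal realann
  -- complement estimate
  have hI2 : ∫⁻ x in (ball xB r)ᶜ,
      (‖M x‖₊ : ℝ≥0∞) * ENNReal.ofReal (‖x - xB‖ ^ a) ≤
        ENNReal.ofReal (D * (1 - q)⁻¹) := by
    calc ∫⁻ x in (ball xB r)ᶜ, (‖M x‖₊ : ℝ≥0∞) * ENNReal.ofReal (‖x - xB‖ ^ a)
        ≤ ∫⁻ x in ⋃ k : ℕ, (ball xB (2 ^ (k + 1) * r) \ ball xB (2 ^ k * r)),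
            (‖M x‖₊ : ℝ≥0∞) * ENNReal.ofReal (‖x - xB‖ ^ a) := lintegral_mono_set hcover
      _ ≤ ∑' k : ℕ, ∫⁻ x in (ball xB (2 ^ (k + 1) * r) \ ball xB (2 ^ k * r)),
            (‖M x‖₊ : ℝ≥0∞) * ENNReal.ofReal (‖x - xB‖ ^ a) := lintegral_iUnion_le _ _
      _ ≤ ∑' k : ℕ, ENNReal.ofReal (D * q ^ k) := ENNReal.tsum_le_tsum hterm
      _ = ENNReal.ofReal D * ∑' k : ℕ, (ENNReal.ofReal q) ^ k := by
          rw [← ENNReal.tsum_mul_left]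
          refine tsum_congr fun k => ?_
          rw [ENNReal.ofReal_mul hDpos.le, ENNReal.ofReal_pow hq0.le]
      _ = ENNReal.ofReal D * (1 - ENNReal.ofReal q)⁻¹ := by rw [ENNReal.tsum_geometric]
      _ = ENNReal.ofReal (D * (1 - q)⁻¹) := by
          rw [ENNReal.ofReal_mul hDpos.le, ENNReal.ofReal_inv_of_pos h1q,
            ENNReal.ofReal_sub _ hq0.le, ENNReal.ofReal_one]
  -- total
  have htotal : ∫⁻ x, (‖M x‖₊ : ℝ≥0∞) * ENNReal.ofReal (‖x - xB‖ ^ a) ≤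
      ENNReal.ofReal (C1 + D * (1 - q)⁻¹) := by
    rw [← lintegral_add_compl
      (fun x => (‖M x‖₊ : ℝ≥0∞) * ENNReal.ofReal (‖x - xB‖ ^ a)) measurableSet_ball
      (A := ball xB r), ENNReal.ofReal_add hC1pos.le (by positivity)]
    exact add_le_add hI1 hI2
  calc ‖∫ x, M x * ((∏ i, (x i - xB i) ^ α i : ℝ) : ℂ)‖
      ≤ (∫⁻ x, ENNReal.ofReal ‖M x * ((∏ i, (x i - xB i) ^ α i : ℝ) : ℂ)‖).toReal :=
        norm_integral_le_lintegral_norm _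
    _ ≤ C1 + D * (1 - q)⁻¹ := ENNReal.toReal_le_of_le_ofReal
        (by positivity) ((lintegral_mono hpoly).trans htotal)
    _ ≤ C1 + D * (1 - q)⁻¹ + 1 := by linarith
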